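/- Let Ω ⊆ D∖{0} be a union of orbits gR^× in a finite right R-module D over a finite Frobenius ring R, and suppose there exist v₁, v₂ ∈ ℝ such that λ(Ω) := Σ_{g∈Ω} λ(g) ∈ {v₁, v₂} for every nontrivial character λ of (D,+). If χ is a generating character of R and x ∈ R^k with D the column space of G = (g₁|...|gₙ) and Ω = g₁R^× ∪ ... ∪ gₙR^×, then Σ_{g∈Ω} w_hom(x·g) = |Ω| − Σ_{g∈Ω} χ(x·g) takes only values in {0, |Ω|−v₁, |Ω|−v₂}; hence the left code C = {xG : x ∈ R^k} has at most two nonzero homogeneous weights. -/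

import Mathlib

open scoped Classical

/-- The normalized homogeneous weight defined from an additive character. -/
noncomputable def whom {R : Type} [Ring R] [Fintype R] (χ : AddChar R ℂ) (x : R) : ℂ :=
  1 - (Fintype.card Rˣ : ℂ)⁻¹ * ∑ u : Rˣ, χ ((u : R) * x)

/-- The homogeneous weight of a word, extended additively. -/
noncomputable def whomV {R : Type} [Ring R] [Fintype R] (χ : AddChar R ℂ)
    {n : ℕ} (c : Fin n → R) : ℂ :=
  ∑ j, whom χ (c j)

/-- A generating character: a character of `(R,+)` whose kernel contains no
nonzero left ideal. -/
def IsGenChar {R : Type} [Ring R] [Fintype R] (χ : AddChar R ℂ) : Prop :=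
  ∀ I : Ideal R, I ≠ ⊥ → ∃ x ∈ I, χ x ≠ 1


set_option linter.unusedSectionVars false
set_option linter.unusedVariables false
set_option maxHeartbeats 1600000

section Sym
variable {R : Type} [Ring R] [Fintype R] (χ : AddChar R ℂ)

lemma chi_ne_zero (x : R) : χ x ≠ 0 := by
  intro h
  have := χ.map_add_eq_mul x (-x)
  simp [h] at this

lemma chi_diff_one {x y : R} (h : χ x = χ y) : χ (x - y) = 1 := by
  rw [χ.map_sub_eq_div, h, div_self (chi_ne_zero χ _)]

lemma left_nondeg (hχ : IsGenChar χ) (a : R) (h : ∀ r : R, χ (r * a) = 1) : a = 0 := by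
  by_contra ha
  have : LinearMap.range (LinearMap.toSpanSingleton R R a) ≠ ⊥ := by
    intro hbot
    have : a ∈ LinearMap.range (LinearMap.toSpanSingleton R R a) := ⟨1, by simp⟩
    rw [hbot] at this
    exact ha (by simpa using this)
  obtain ⟨x, hx, hx1⟩ := hχ _ this
  obtain ⟨r, rfl⟩ := hx
  exact hx1 (by simpa [LinearMap.toSpanSingleton_apply, smul_eq_mul] using h r)

noncomputable def PhiMap (a : R) : AddChar R ℂ := χ.compAddMonoidHom (AddMonoidHom.mulRight a)
noncomputable def PsiMap (b : R) : AddChar R ℂ := χ.compAddMonoidHom (AddMonoidHom.mulLeft b)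

lemma PhiMap_apply (a r : R) : PhiMap χ a r = χ (r * a) := rfl
lemma PsiMap_apply (b r : R) : PsiMap χ b r = χ (b * r) := rfl

lemma PhiMap_bij (hχ : IsGenChar χ) : Function.Bijective (PhiMap χ) := by
  rw [Fintype.bijective_iff_injective_and_card]
  refine ⟨?_, (AddChar.card_eq).symm⟩
  intro a a' h
  have h3 : ∀ r : R, χ (r * (a - a')) = 1 := fun r => by
    rw [mul_sub]
    exact chi_diff_one χ (by rw [← PhiMap_apply χ a r, ← PhiMap_apply χ a' r, h])
  exact sub_eq_zero.mp (left_nondeg χ hχ _ h3)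

lemma right_nondeg (hχ : IsGenChar χ) (b : R) (h : ∀ r : R, χ (b * r) = 1) : b = 0 := by
  have hall : ∀ ψ : AddChar R ℂ, ψ b = 1 := by
    intro ψ
    obtain ⟨a, rfl⟩ := (PhiMap_bij χ hχ).2 ψ
    rw [PhiMap_apply]
    exact h a
  by_contra hb
  obtain ⟨ψ, hψ⟩ := AddChar.exists_apply_ne_zero.mpr hb
  exact hψ (hall ψ)

lemma PsiMap_bij (hχ : IsGenChar χ) : Function.Bijective (PsiMap χ) := by
  rw [Fintype.bijective_iff_injective_and_card]
  refine ⟨?_, (AddChar.card_eq).symm⟩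
  intro b b' h
  have h3 : ∀ r : R, χ ((b - b') * r) = 1 := fun r => by
    rw [sub_mul]
    exact chi_diff_one χ (by rw [← PsiMap_apply χ b r, ← PsiMap_apply χ b' r, h])
  exact sub_eq_zero.mp (right_nondeg χ hχ _ h3)

/-- the "Nakayama" bijection: χ (σ a * r) = χ (r * a) -/
noncomputable def sigmaFn (hχ : IsGenChar χ) (a : R) : R :=
  Classical.choose ((PsiMap_bij χ hχ).2 (PhiMap χ a))

lemma sigma_prop (hχ : IsGenChar χ) (a r : R) : χ (sigmaFn χ hχ a * r) = χ (r * a) := by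
  have := Classical.choose_spec ((PsiMap_bij χ hχ).2 (PhiMap χ a))
  have := DFunLike.congr_fun this r
  rwa [PsiMap_apply, PhiMap_apply] at this

lemma sigma_uniq (hχ : IsGenChar χ) {b b' : R} (h : ∀ r : R, χ (b * r) = χ (b' * r)) : b = b' :=
  (PsiMap_bij χ hχ).1 (DFunLike.ext _ _ fun r => by rw [PsiMap_apply, PsiMap_apply, h])

lemma sigma_one (hχ : IsGenChar χ) : sigmaFn χ hχ 1 = 1 :=
  sigma_uniq χ hχ fun r => by rw [sigma_prop, one_mul, mul_one]

lemma sigma_mul (hχ : IsGenChar χ) (a b : R) :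
    sigmaFn χ hχ (a * b) = sigmaFn χ hχ a * sigmaFn χ hχ b := by
  apply sigma_uniq χ hχ
  intro r
  rw [sigma_prop, ← mul_assoc, ← sigma_prop χ hχ b (r * a), ← mul_assoc,
    ← sigma_prop χ hχ a (sigmaFn χ hχ b * r), ← mul_assoc]

lemma sigma_chi (hχ : IsGenChar χ) (a : R) : χ (sigmaFn χ hχ a) = χ a := by
  have := sigma_prop χ hχ a 1
  rwa [mul_one, one_mul] at this

lemma sigma_inj (hχ : IsGenChar χ) : Function.Injective (sigmaFn χ hχ) := by
  intro a a' h
  apply (PhiMap_bij χ hχ).1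
  apply DFunLike.ext
  intro r
  rw [PhiMap_apply, PhiMap_apply, ← sigma_prop χ hχ a r, ← sigma_prop χ hχ a' r, h]

noncomputable def sigmaUnit (hχ : IsGenChar χ) (u : Rˣ) : Rˣ where
  val := sigmaFn χ hχ u
  inv := sigmaFn χ hχ (↑u⁻¹)
  val_inv := by rw [← sigma_mul, Units.mul_inv, sigma_one]
  inv_val := by rw [← sigma_mul, Units.inv_mul, sigma_one]

lemma sigmaUnit_bij (hχ : IsGenChar χ) : Function.Bijective (sigmaUnit χ hχ) :=
  Finite.injective_iff_bijective.mp fun u u' h =>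
    Units.ext (sigma_inj χ hχ (congrArg Units.val h))

theorem sym (hχ : IsGenChar χ) (t : R) :
    ∑ u : Rˣ, χ ((u : R) * t) = ∑ u : Rˣ, χ (t * (u : R)) := by
  have h1 : ∀ u : Rˣ, χ ((u : R) * t) = χ (sigmaFn χ hχ t * u) := fun u =>
    (sigma_prop χ hχ t u).symm
  calc ∑ u : Rˣ, χ ((u : R) * t) = ∑ u : Rˣ, χ (sigmaFn χ hχ t * u) := by
        exact Finset.sum_congr rfl fun u _ => h1 u
    _ = ∑ u : Rˣ, χ (t * (u : R)) := by
        refine (Fintype.sum_bijective (sigmaUnit χ hχ) (sigmaUnit_bij χ hχ) _ _ fun u => ?_).symm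
        show χ (t * (u : R)) = χ (sigmaFn χ hχ t * sigmaFn χ hχ u)
        rw [← sigma_mul, sigma_chi]

/-- invariance of the unit-sum under right multiplication by a unit -/
lemma sum_units_right_inv (hχ : IsGenChar χ) (t : R) (u : Rˣ) :
    ∑ u' : Rˣ, χ ((u' : R) * (t * (u : R))) = ∑ u' : Rˣ, χ ((u' : R) * t) := by
  rw [sym χ hχ (t * u), sym χ hχ t]
  calc ∑ u' : Rˣ, χ (t * (u : R) * (u' : R))
      = ∑ u' : Rˣ, χ (t * ((u * u' : Rˣ) : R)) := by
        refine Finset.sum_congr rfl fun u' _ => ?_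
        rw [Units.val_mul, mul_assoc]
    _ = ∑ u' : Rˣ, χ (t * (u' : R)) :=
        Fintype.sum_equiv (Equiv.mulLeft u) _ _ fun u' => rfl

end Sym


noncomputable local instance fintypeOfFinite' (α : Type) [Finite α] : Fintype α :=
  Fintype.ofFinite α

section Cancel
variable {S : Type} [Ring S]

instance finite_lmap {X T : Type} [AddCommGroup X] [Module S X] [AddCommGroup T] [Module S T]
    [Finite X] [Finite T] : Finite (X →ₗ[S] T) :=
  Finite.of_injective (fun f => (f : X → T)) DFunLike.coe_injective

instance finite_submodule {T : Type} [AddCommGroup T] [Module S T] [Finite T] :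
    Finite (Submodule S T) :=
  Finite.of_injective (fun W : Submodule S T => (W : Set T)) SetLike.coe_injective

variable {X Y T : Type} [AddCommGroup X] [Module S X] [AddCommGroup Y] [Module S Y]
  [AddCommGroup T] [Module S T]

/-- number of surjective linear maps -/
noncomputable def surjCard (S : Type) [Ring S] (X T : Type) [AddCommGroup X] [Module S X]
    [AddCommGroup T] [Module S T] : ℕ :=
  Nat.card {f : X →ₗ[S] T // Function.Surjective f}

noncomputable def homCard (S : Type) [Ring S] (X T : Type) [AddCommGroup X] [Module S X]
    [AddCommGroup T] [Module S T] : ℕ :=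
  Nat.card (X →ₗ[S] T)

lemma surjCard_congr_right {T' : Type} [AddCommGroup T'] [Module S T'] (e : T ≃ₗ[S] T') :
    surjCard S X T = surjCard S X T' := by
  apply Nat.card_congr
  refine ⟨fun f => ⟨e.toLinearMap ∘ₗ f.1, (EquivLike.surjective e).comp f.2⟩,
          fun g => ⟨e.symm.toLinearMap ∘ₗ g.1, (EquivLike.surjective e.symm).comp g.2⟩,
          fun f => ?_, fun g => ?_⟩ <;>
  · apply Subtype.ext
    apply LinearMap.ext
    intro x
    simp

lemma sigma_aux (W W' : Submodule S T) (h : W' = W) (g' : X →ₗ[S] ↥W') (g : X →ₗ[S] ↥W)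
    (hs' : Function.Surjective g') (hs : Function.Surjective g)
    (hvals : ∀ x : X, ((g' x : T)) = (g x : T)) :
    (⟨W', g', hs'⟩ : Σ W : Submodule S T, {f : X →ₗ[S] ↥W // Function.Surjective f}) =
      ⟨W, g, hs⟩ := by
  subst h
  exact congrArg (fun z : {f : X →ₗ[S] ↥W' // Function.Surjective f} =>
    (⟨W', z⟩ : Σ W : Submodule S T, {f : X →ₗ[S] ↥W // Function.Surjective f}))
    (Subtype.ext (LinearMap.ext fun x => Subtype.ext (hvals x)))

/-- the sigma decomposition of the hom space by range -/
noncomputable def homSigmaEquiv (S : Type) [Ring S] (X T : Type) [AddCommGroup X] [Module S X]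
    [AddCommGroup T] [Module S T] :
    (X →ₗ[S] T) ≃ (Σ W : Submodule S T, {f : X →ₗ[S] ↥W // Function.Surjective f}) where
  toFun f := ⟨LinearMap.range f, f.rangeRestrict, f.surjective_rangeRestrict⟩
  invFun p := p.1.subtype ∘ₗ p.2.1
  left_inv f := by ext x; rfl
  right_inv := by
    rintro ⟨W, g, hg⟩
    have hR : LinearMap.range (W.subtype ∘ₗ g) = W := by
      rw [LinearMap.range_comp, LinearMap.range_eq_top.2 hg, Submodule.map_top,
        Submodule.range_subtype]
    exact sigma_aux _ _ hR _ _ _ _ (fun x => rfl)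

lemma homCard_eq_sum [Finite X] [Finite T] :
    homCard S X T = ∑ W ∈ (Finset.univ : Finset (Submodule S T)), surjCard S X ↥W := by
  rw [homCard, Nat.card_congr (homSigmaEquiv S X T)]
  haveI : ∀ W : Submodule S T, Finite {f : X →ₗ[S] ↥W // Function.Surjective f} :=
    fun W => Subtype.finite
  rw [Nat.card_eq_fintype_card, Fintype.card_sigma]
  refine Finset.sum_congr rfl fun W _ => ?_
  rw [surjCard, Nat.card_eq_fintype_card]

lemma card_lt_of_ne_top [Finite T] {W : Submodule S T} (h : W ≠ ⊤) :
    Nat.card ↥W < Nat.card T := by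
  cases nonempty_fintype T
  obtain ⟨x, hx⟩ : ∃ x : T, x ∉ W := by
    by_contra hc
    push_neg at hc
    exact h (Submodule.eq_top_iff'.2 hc)
  rw [Nat.card_eq_fintype_card, Nat.card_eq_fintype_card]
  exact Fintype.card_lt_of_injective_of_notMem _ Subtype.coe_injective
    (by rintro ⟨⟨y, hy⟩, rfl⟩; exact hx hy)

end Cancel

section Cancel2
variable {S : Type} [Ring S]

lemma surjCard_eq_of_homCard_eq {X Y : Type} [AddCommGroup X] [Module S X]
    [AddCommGroup Y] [Module S Y] [Finite X] [Finite Y]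
    (hhom : ∀ (T : Type) [AddCommGroup T] [Module S T] [Finite T],
      homCard S X T = homCard S Y T) :
    ∀ (T : Type) [AddCommGroup T] [Module S T] [Finite T],
      surjCard S X T = surjCard S Y T := by
  suffices H : ∀ (N : ℕ) (T : Type) [AddCommGroup T] [Module S T] [Finite T],
      Nat.card T = N → surjCard S X T = surjCard S Y T by
    intro T _ _ _
    exact H (Nat.card T) T rfl
  intro N
  induction N using Nat.strong_induction_on with
  | _ N IH =>
    intro T _ _ _ hN
    have htop : (⊤ : Submodule S T) ∈ (Finset.univ : Finset (Submodule S T)) :=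
      Finset.mem_univ _
    have hsplit := Finset.sum_eq_sum_sdiff_singleton_add htop (fun W => surjCard S X ↥W)
    have hsplit' := Finset.sum_eq_sum_sdiff_singleton_add htop (fun W => surjCard S Y ↥W)
    have hX := @homCard_eq_sum S _ X T _ _ _ _ _ _
    have hY := @homCard_eq_sum S _ Y T _ _ _ _ _ _
    rw [hsplit] at hX
    rw [hsplit'] at hY
    have hsums : ∑ W ∈ Finset.univ \ {(⊤ : Submodule S T)}, surjCard S X ↥W =
        ∑ W ∈ Finset.univ \ {(⊤ : Submodule S T)}, surjCard S Y ↥W := by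
      refine Finset.sum_congr rfl fun W hW => ?_
      have hWne : W ≠ ⊤ := by
        rw [Finset.mem_sdiff, Finset.mem_singleton] at hW
        exact hW.2
      exact IH (Nat.card ↥W) (hN ▸ card_lt_of_ne_top hWne) ↥W rfl
    have h1 : surjCard S X ↥(⊤ : Submodule S T) = surjCard S Y ↥(⊤ : Submodule S T) := by
      have := hhom T
      rw [hX, hY, hsums] at this
      exact Nat.add_left_cancel this
    calc surjCard S X T = surjCard S X ↥(⊤ : Submodule S T) :=
          (surjCard_congr_right (Submodule.topEquiv (R := S) (M := T)).symm)
      _ = surjCard S Y ↥(⊤ : Submodule S T) := h1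
      _ = surjCard S Y T := (surjCard_congr_right (Submodule.topEquiv (R := S) (M := T)))

/-- splitting of homs from a product -/
def prodHomEquiv {C A T : Type} [AddCommGroup C] [Module S C] [AddCommGroup A] [Module S A]
    [AddCommGroup T] [Module S T] :
    ((C × A) →ₗ[S] T) ≃ ((C →ₗ[S] T) × (A →ₗ[S] T)) where
  toFun f := (f ∘ₗ LinearMap.inl S C A, f ∘ₗ LinearMap.inr S C A)
  invFun p := p.1.coprod p.2
  left_inv f := by
    apply LinearMap.ext
    rintro ⟨x, y⟩
    simp only [LinearMap.coprod_apply, LinearMap.comp_apply, LinearMap.inl_apply,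
      LinearMap.inr_apply]
    rw [← f.map_add]
    simp
  right_inv p := by
    refine Prod.ext ?_ ?_ <;>
    · apply LinearMap.ext
      intro x
      simp

theorem cancel_finite_modules {A C D : Type}
    [AddCommGroup A] [Module S A] [AddCommGroup C] [Module S C] [AddCommGroup D] [Module S D]
    [Finite A] [Finite C] [Finite D]
    (e : (C × A) ≃ₗ[S] (D × A)) : Nonempty (C ≃ₗ[S] D) := by
  have hhom : ∀ (T : Type) [AddCommGroup T] [Module S T] [Finite T],
      homCard S C T = homCard S D T := by
    intro T _ _ _
    have h1 : homCard S (C × A) T = homCard S (D × A) T := by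
      apply Nat.card_congr
      exact ⟨fun f => f ∘ₗ e.symm.toLinearMap, fun g => g ∘ₗ e.toLinearMap,
        fun f => by apply LinearMap.ext; intro x; simp,
        fun g => by apply LinearMap.ext; intro x; simp⟩
    have h2 : homCard S (C × A) T = homCard S C T * homCard S A T := by
      rw [homCard, Nat.card_congr (prodHomEquiv (S := S)), Nat.card_prod]; rfl
    have h3 : homCard S (D × A) T = homCard S D T * homCard S A T := by
      rw [homCard, Nat.card_congr (prodHomEquiv (S := S)), Nat.card_prod]; rfl
    have hA : 0 < homCard S A T := Nat.card_pos
    rw [h2, h3] at h1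
    exact Nat.eq_of_mul_eq_mul_right hA h1
  have hsurj := surjCard_eq_of_homCard_eq hhom D
  have hDD : 0 < surjCard S D D := by
    have : Nonempty {f : D →ₗ[S] D // Function.Surjective f} :=
      ⟨LinearMap.id, Function.surjective_id⟩
    exact Nat.card_pos
  rw [← hsurj] at hDD
  obtain ⟨⟨f, hf⟩⟩ := (Nat.card_pos_iff.mp hDD).1
  have hcard : Nat.card C = Nat.card D := by
    have := Nat.card_congr e.toEquiv
    rw [Nat.card_prod, Nat.card_prod] at this
    exact Nat.eq_of_mul_eq_mul_right (Nat.card_pos) this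
  have hbij : Function.Bijective f := by
    cases nonempty_fintype C
    cases nonempty_fintype D
    rw [Fintype.bijective_iff_surjective_and_card]
    rw [Nat.card_eq_fintype_card, Nat.card_eq_fintype_card] at hcard
    exact ⟨hf, hcard⟩
  exact ⟨LinearEquiv.ofBijective f hbij⟩

end Cancel2

section AL
variable {R : Type} [Ring R]

lemma pow_stab (s : R) {m n : ℕ} (hmn : m < n) (h : s ^ m = s ^ n) :
    ∀ j k : ℕ, m ≤ j → s ^ (j + k * (n - m)) = s ^ j := by
  have hd : 0 < n - m := Nat.sub_pos_of_lt hmn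
  have hstep : ∀ j, m ≤ j → s ^ (j + (n - m)) = s ^ j := by
    intro j hj
    obtain ⟨i, rfl⟩ := Nat.exists_eq_add_of_le hj
    rw [show m + i + (n - m) = n + i by omega, pow_add, pow_add, ← h]
  intro j k hj
  induction k with
  | zero => simp
  | succ k ih =>
    have : j + (k + 1) * (n - m) = (j + k * (n - m)) + (n - m) := by ring
    rw [this, hstep _ (le_trans hj (Nat.le_add_right _ _)), ih]

lemma exists_idem_pow [Fintype R] (s : R) : ∃ N, 1 ≤ N ∧ s ^ N * s ^ N = s ^ N := by
  obtain ⟨m, n, hlt, h⟩ : ∃ m n : ℕ, m < n ∧ s ^ m = s ^ n := by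
    obtain ⟨m, n, hne, h⟩ := Finite.exists_ne_map_eq_of_infinite (fun i : ℕ => s ^ i)
    rcases lt_or_gt_of_ne hne with hlt | hlt
    · exact ⟨m, n, hlt, h⟩
    · exact ⟨n, m, hlt, h.symm⟩
  set d := n - m with hd
  have hd1 : 1 ≤ d := by omega
  refine ⟨(m + 1) * d, by nlinarith, ?_⟩
  rw [← pow_add]
  have h2 := pow_stab s hlt h ((m + 1) * d) (m + 1) (by nlinarith)
  rw [← hd] at h2
  exact h2

lemma idem_pow_idem {e : R} (he : e * e = e) : ∀ k, 1 ≤ k → e ^ k = e := by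
  intro k hk
  induction k with
  | zero => omega
  | succ k ih =>
    rcases Nat.eq_or_lt_of_le hk with h1 | h1
    · simp [← h1]
    · rw [pow_succ, ih (by omega), he]

/-- The right ideal `{x | e x = x}` (equals `eR` for idempotent `e`), as a module over `Rᵐᵒᵖ`. -/
def cornerSub (e : R) : Submodule Rᵐᵒᵖ R where
  carrier := {x : R | e * x = x}
  add_mem' := fun {x y} hx hy => by simp only [Set.mem_setOf_eq] at *; rw [mul_add, hx, hy]
  zero_mem' := by simp
  smul_mem' := fun c x hx => by
    simp only [Set.mem_setOf_eq] at *
    show e * (x * c.unop) = x * c.unop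
    rw [← mul_assoc, hx]

lemma mem_cornerSub {e x : R} : x ∈ cornerSub e ↔ e * x = x := Iff.rfl

lemma cornerSub_smul_val (e : R) (x : ↥(cornerSub e)) (r : R) :
    ((MulOpposite.op r • x : ↥(cornerSub e)) : R) = (x : R) * r := rfl

/-- decomposition of `R` by an idempotent -/
noncomputable def cornerDecomp {e : R} (he : e * e = e) :
    R ≃ₗ[Rᵐᵒᵖ] (↥(cornerSub e) × ↥(cornerSub (1 - e))) where
  toFun x := (⟨e * x, by rw [mem_cornerSub, ← mul_assoc, he]⟩,
              ⟨(1 - e) * x, by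
                have h1e : (1 - e) * (1 - e) = 1 - e := by
                  rw [sub_mul, one_mul, mul_sub, mul_one, he]; abel
                rw [mem_cornerSub, ← mul_assoc, h1e]⟩)
  map_add' x y := by
    refine Prod.ext (Subtype.ext ?_) (Subtype.ext ?_) <;> simp [mul_add]
  map_smul' c x := by
    refine Prod.ext (Subtype.ext ?_) (Subtype.ext ?_)
    · show e * (x * c.unop) = (e * x) * c.unop
      rw [mul_assoc]
    · show (1 - e) * (x * c.unop) = ((1 - e) * x) * c.unop
      rw [mul_assoc]
  invFun p := (p.1 : R) + (p.2 : R)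
  left_inv x := by
    show e * x + (1 - e) * x = x
    rw [sub_mul, one_mul, add_sub_cancel]
  right_inv p := by
    obtain ⟨⟨y, hy⟩, ⟨z, hz⟩⟩ := p
    rw [mem_cornerSub] at hy hz
    refine Prod.ext (Subtype.ext ?_) (Subtype.ext ?_)
    · show e * (y + z) = y
      have hez : e * z = 0 := by
        have : e * ((1 - e) * z) = e * z := by rw [hz]
        rw [← mul_assoc, mul_sub, mul_one, he, sub_self, zero_mul] at this
        exact this.symm
      rw [mul_add, hy, hez, add_zero]
    · show (1 - e) * (y + z) = z
      have hey : (1 - e) * y = 0 := by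
        have : (1 - e) * (e * y) = (1 - e) * y := by rw [hy]
        rw [← mul_assoc, sub_mul, one_mul, he, sub_self, zero_mul] at this
        exact this.symm
      rw [mul_add, hey, hz, zero_add]

/-- isomorphism of corners induced by `p, q` with `p q = e`, `q p = f` -/
noncomputable def cornerIso {e f p q : R} (hpq : p * q = e) (hqp : q * p = f)
    (hep : e * p = p) (hfq : f * q = q) :
    ↥(cornerSub f) ≃ₗ[Rᵐᵒᵖ] ↥(cornerSub e) where
  toFun x := ⟨p * x, by rw [mem_cornerSub, ← mul_assoc, hep]⟩
  map_add' x y := Subtype.ext (by simp [mul_add])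
  map_smul' c x := Subtype.ext (by
    show p * ((x : R) * c.unop) = (p * (x : R)) * c.unop
    rw [mul_assoc])
  invFun y := ⟨q * y, by rw [mem_cornerSub, ← mul_assoc, hfq]⟩
  left_inv x := Subtype.ext (by
    show q * (p * x) = (x : R)
    rw [← mul_assoc, hqp]
    exact x.2)
  right_inv y := Subtype.ext (by
    show p * (q * y) = (y : R)
    rw [← mul_assoc, hpq]
    exact y.2)

end AL

section AL2
variable {R : Type} [Ring R] [Fintype R]

lemma mul_pow_right_stable {v s : R} (hv : v * s = v) : ∀ N, v * s ^ N = v := by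
  intro N
  induction N with
  | zero => simp
  | succ N ih => rw [pow_succ, ← mul_assoc, ih, hv]

/-- From matched corner data, produce a unit congruent to `p` modulo `(1-e)·R`. -/
lemma exists_unit_glue (e f p q : R) (he : e * e = e) (hf : f * f = f)
    (hpq : p * q = e) (hqp : q * p = f) (hep : e * p = p) (hpf : p * f = p)
    (hfq : f * q = q) :
    ∃ (u : Rˣ) (c : R), (u : R) = p + c ∧ (1 - e) * c = c := by
  classical
  have h1e : (1 - e) * (1 - e) = 1 - e := by
    rw [sub_mul, one_mul, mul_sub, mul_one, he]; abel
  have h1f : (1 - f) * (1 - f) = 1 - f := by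
    rw [sub_mul, one_mul, mul_sub, mul_one, hf]; abel
  obtain ⟨ψ⟩ : Nonempty (↥(cornerSub (1 - f) : Submodule Rᵐᵒᵖ R) ≃ₗ[Rᵐᵒᵖ]
      ↥(cornerSub (1 - e) : Submodule Rᵐᵒᵖ R)) := by
    apply cancel_finite_modules (A := ↥(cornerSub (f : R)))
    exact (LinearEquiv.prodComm Rᵐᵒᵖ _ _).trans ((cornerDecomp hf).symm.trans
      ((cornerDecomp he).trans
      ((LinearEquiv.prodComm Rᵐᵒᵖ _ _).trans
        (LinearEquiv.prodCongr (LinearEquiv.refl Rᵐᵒᵖ _)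
          (cornerIso hpq hqp hep hfq).symm))))
  have h1fmem : (1 - f) ∈ cornerSub ((1 : R) - f) := by rw [mem_cornerSub]; exact h1f
  set x₀ : ↥(cornerSub ((1:R) - f)) := ⟨1 - f, h1fmem⟩ with hx₀
  set c : R := (ψ x₀ : R) with hc
  have hcmem : (1 - e) * c = c := (ψ x₀).2
  have hx₀smul : ∀ r : R, ((MulOpposite.op r • x₀ : ↥(cornerSub ((1:R) - f))) : R)
      = (1 - f) * r := by
    intro r
    rw [cornerSub_smul_val]
  have hψsmul : ∀ r : R, (ψ (MulOpposite.op r • x₀) : R) = c * r := by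
    intro r
    rw [map_smul, cornerSub_smul_val, ← hc]
  have hc1f : c * (1 - f) = c := by
    have h2 := hψsmul (1 - f)
    rw [show MulOpposite.op (1 - f) • x₀ = x₀ from Subtype.ext (by
      rw [hx₀smul]; exact h1f)] at h2
    rw [← h2]
  set u₀ : R := p + c with hu₀
  have he1e : e * (1 - e) = 0 := by rw [mul_sub, mul_one, he, sub_self]
  have hec : e * c = 0 := by rw [← hcmem, ← mul_assoc, he1e, zero_mul]
  have hu_inj : ∀ r : R, u₀ * r = 0 → r = 0 := by
    intro r hr
    have hsplit : p * r + c * r = 0 := by rw [← add_mul, ← hu₀, hr]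
    have hpr : p * r = 0 := by
      have h0 : e * (p * r + c * r) = 0 := by rw [hsplit, mul_zero]
      rwa [mul_add, ← mul_assoc, ← mul_assoc, hep, hec, zero_mul, add_zero] at h0
    have hcr : c * r = 0 := by
      have := hsplit
      rwa [hpr, zero_add] at this
    have hfr : f * r = 0 := by
      have h0 : q * (p * r) = 0 := by rw [hpr, mul_zero]
      rwa [← mul_assoc, hqp] at h0
    have h1fr : (1 - f) * r = 0 := by
      have hz : ψ (MulOpposite.op r • x₀) = 0 := by
        apply Subtype.ext
        rw [hψsmul]
        exact hcr
      have h3 := ψ.injective (hz.trans (ψ.map_zero).symm)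
      have hval := congrArg (Subtype.val) h3
      rwa [hx₀smul] at hval
    have h4 : (f + (1 - f)) * r = 0 := by rw [add_mul, hfr, h1fr, add_zero]
    rwa [add_sub_cancel, one_mul] at h4
  have hu_surj : ∀ y : R, ∃ r : R, u₀ * r = y := by
    intro y
    have hymem : (1 - e) * y ∈ cornerSub ((1:R) - e) := by
      rw [mem_cornerSub, ← mul_assoc, h1e]
    set zz := ψ.symm ⟨(1 - e) * y, hymem⟩ with hzz
    set z : R := (zz : R) with hz
    have hzmem : (1 - f) * z = z := zz.2
    have hcz : c * z = (1 - e) * y := by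
      have h5 : ψ (MulOpposite.op z • x₀) = ψ zz := by
        apply congrArg
        apply Subtype.ext
        rw [hx₀smul]
        exact hzmem
      have h2 := congrArg Subtype.val h5
      rw [hψsmul] at h2
      rw [h2, hzz, LinearEquiv.apply_symm_apply]
    refine ⟨q * y + z, ?_⟩
    have hterm1 : p * (q * y) = e * y := by rw [← mul_assoc, hpq]
    have hterm2 : p * z = 0 := by
      have hp1f : p * (1 - f) = 0 := by rw [mul_sub, mul_one, hpf, sub_self]
      rw [← hzmem, ← mul_assoc, hp1f, zero_mul]
    have hterm3 : c * (q * y) = 0 := by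
      have h1fq : (1 - f) * q = 0 := by rw [sub_mul, one_mul, hfq, sub_self]
      rw [← hc1f, mul_assoc, ← mul_assoc (1 - f) q y, h1fq, zero_mul, mul_zero]
    have h6 : u₀ * (q * y + z) = e * y + (1 - e) * y := by
      rw [hu₀, add_mul, mul_add, mul_add, hterm1, hterm2, add_zero, hterm3, zero_add, hcz]
    rw [h6, sub_mul, one_mul, add_sub_cancel]
  obtain ⟨z₁, hz₁⟩ := hu_surj 1
  have hz₁u : z₁ * u₀ = 1 := by
    have h0 : u₀ * (z₁ * u₀ - 1) = 0 := by
      rw [mul_sub, mul_one, ← mul_assoc, hz₁, one_mul, sub_self]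
    have := hu_inj _ h0
    rwa [sub_eq_zero] at this
  exact ⟨⟨u₀, z₁, hz₁, hz₁u⟩, c, rfl, hcmem⟩

/-- In a finite ring, two vectors generating the same cyclic submodule
are right-associates. -/
theorem assoc_of_same_cyclic {k : ℕ} (v w : Fin k → R) (a b : R)
    (hw : ∀ i, w i = v i * a) (hv : ∀ i, v i = w i * b) :
    ∃ u : Rˣ, ∀ i, w i = v i * (u : R) := by
  classical
  have hvs : ∀ i, v i * (a * b) = v i := fun i => by rw [← mul_assoc, ← hw, ← hv]
  have hwt : ∀ i, w i * (b * a) = w i := fun i => by rw [← mul_assoc, ← hv, ← hw]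
  set s : R := a * b with hs
  set t : R := b * a with ht
  obtain ⟨N₁, hN₁, hidem₁⟩ := exists_idem_pow s
  obtain ⟨N₂, hN₂, hidem₂⟩ := exists_idem_pow t
  have hNge : 1 ≤ N₁ * N₂ := le_trans (by norm_num) (Nat.mul_le_mul hN₁ hN₂)
  set N : ℕ := N₁ * N₂ with hN
  have he : s ^ N * s ^ N = s ^ N := by
    rw [hN, pow_mul, idem_pow_idem hidem₁ N₂ hN₂]
    exact hidem₁
  have hf : t ^ N * t ^ N = t ^ N := by
    rw [hN, mul_comm N₁ N₂, pow_mul, idem_pow_idem hidem₂ N₁ hN₁]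
    exact hidem₂
  have heN : ∀ k, 1 ≤ k → (s ^ N) ^ k = s ^ N := idem_pow_idem he
  have hfN : ∀ k, 1 ≤ k → (t ^ N) ^ k = t ^ N := idem_pow_idem hf
  obtain ⟨M, hM⟩ : ∃ M, N = M + 1 := ⟨N - 1, by omega⟩
  have hconj : ∀ j : ℕ, a * t ^ j = s ^ j * a := fun j =>
    (show SemiconjBy a t s by show a * t = s * a; rw [ht, hs, ← mul_assoc]).pow_right j
  have hconj' : ∀ j : ℕ, b * s ^ j = t ^ j * b := fun j =>
    (show SemiconjBy b s t by show b * s = t * b; rw [ht, hs, ← mul_assoc]).pow_right j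
  -- the corner data
  have hpq : (a * t ^ N) * (t ^ M * (b * s ^ N)) = s ^ N := by
    calc (a * t ^ N) * (t ^ M * (b * s ^ N))
        = a * (t ^ N * (t ^ M * (b * s ^ N))) := by rw [mul_assoc]
      _ = a * (t ^ (N + M) * (b * s ^ N)) := by rw [← mul_assoc (t ^ N), ← pow_add]
      _ = (a * t ^ (N + M)) * (b * s ^ N) := by rw [mul_assoc]
      _ = (s ^ (N + M) * a) * (b * s ^ N) := by rw [hconj]
      _ = s ^ (N + M) * ((a * b) * s ^ N) := by rw [mul_assoc, ← mul_assoc a b]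
      _ = s ^ (N + M) * (s ^ 1 * s ^ N) := by rw [← hs, pow_one]
      _ = s ^ (N + M + (1 + N)) := by rw [← pow_add, ← pow_add, add_assoc]
      _ = s ^ (N * 3) := by congr 1; omega
      _ = s ^ N := by rw [pow_mul]; exact heN 3 (by norm_num)
  have hqp : (t ^ M * (b * s ^ N)) * (a * t ^ N) = t ^ N := by
    calc (t ^ M * (b * s ^ N)) * (a * t ^ N)
        = (t ^ M * (t ^ N * b)) * (a * t ^ N) := by rw [hconj']
      _ = t ^ (M + N) * (b * (a * t ^ N)) := by
          rw [← mul_assoc (t ^ M), ← pow_add, mul_assoc]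
      _ = t ^ (M + N) * ((b * a) * t ^ N) := by rw [← mul_assoc b a]
      _ = t ^ (M + N) * (t ^ 1 * t ^ N) := by rw [← ht, pow_one]
      _ = t ^ (M + N + (1 + N)) := by rw [← pow_add, ← pow_add, add_assoc]
      _ = t ^ (N * 3) := by congr 1; omega
      _ = t ^ N := by rw [pow_mul]; exact hfN 3 (by norm_num)
  have hep : s ^ N * (a * t ^ N) = a * t ^ N := by
    rw [hconj, ← mul_assoc, he]
  have hpf : (a * t ^ N) * t ^ N = a * t ^ N := by
    rw [mul_assoc, hf]
  have hfq : t ^ N * (t ^ M * (b * s ^ N)) = t ^ M * (b * s ^ N) := by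
    calc t ^ N * (t ^ M * (b * s ^ N))
        = (t ^ N * t ^ M) * (b * s ^ N) := by rw [mul_assoc]
      _ = (t ^ M * t ^ N) * (b * s ^ N) := by rw [pow_mul_comm]
      _ = t ^ M * (t ^ N * (b * s ^ N)) := by rw [mul_assoc]
      _ = t ^ M * ((t ^ N * b) * s ^ N) := by rw [mul_assoc]
      _ = t ^ M * ((b * s ^ N) * s ^ N) := by rw [← hconj']
      _ = t ^ M * (b * s ^ N) := by rw [mul_assoc, he]
  obtain ⟨u, c, huc, hcmem⟩ := exists_unit_glue (s ^ N) (t ^ N) (a * t ^ N)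
    (t ^ M * (b * s ^ N)) he hf hpq hqp hep hpf hfq
  refine ⟨u, fun i => ?_⟩
  have hv1e : v i * s ^ N = v i := mul_pow_right_stable (hvs i) N
  have hwf : w i * t ^ N = w i := mul_pow_right_stable (hwt i) N
  have hvc : v i * c = 0 := by
    rw [← hcmem, ← mul_assoc, mul_sub, mul_one, hv1e, sub_self, zero_mul]
  rw [huc, mul_add, hvc, add_zero, ← mul_assoc, ← hw, hwf]

end AL2

section Main
variable {R : Type} [Ring R] [Fintype R]

lemma whom_unit_right (χ : AddChar R ℂ) (hχ : IsGenChar χ) (t : R) (u : Rˣ) :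
    whom χ (t * (u : R)) = whom χ t := by
  unfold whom
  rw [sum_units_right_inv χ hχ t u]

/-- the character `v ↦ χ(x·v)` -/
noncomputable def vecChar {k : ℕ} (χ : AddChar R ℂ) (x : Fin k → R) :
    AddChar (Fin k → R) ℂ :=
  χ.compAddMonoidHom (AddMonoidHom.mk' (fun v => ∑ i, x i * v i) (fun v w => by
    simp [Pi.add_apply, mul_add, Finset.sum_add_distrib]))

lemma vecChar_apply {k : ℕ} (χ : AddChar R ℂ) (x v : Fin k → R) :
    vecChar χ x v = χ (∑ i, x i * v i) := rfl

lemma sum_mul_assoc {k : ℕ} (x g : Fin k → R) (t : R) :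
    ∑ i, x i * (g i * t) = (∑ i, x i * g i) * t := by
  rw [Finset.sum_mul]
  exact Finset.sum_congr rfl fun i _ => (mul_assoc _ _ _).symm

variable {k n : ℕ}

lemma orbit_eq_of_assoc (G : Matrix (Fin k) (Fin n) R) (j j' : Fin n) (u : Rˣ)
    (h : ∀ i, G i j' = G i j * (u : R)) :
    Finset.image (fun u' : Rˣ => fun i => G i j' * (u' : R)) Finset.univ =
      Finset.image (fun u' : Rˣ => fun i => G i j * (u' : R)) Finset.univ := by
  ext g
  simp only [Finset.mem_image, Finset.mem_univ, true_and]
  constructor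
  · rintro ⟨u', rfl⟩
    refine ⟨u * u', funext fun i => ?_⟩
    rw [Units.val_mul, ← mul_assoc, ← h i]
  · rintro ⟨u', rfl⟩
    refine ⟨u⁻¹ * u', funext fun i => ?_⟩
    rw [Units.val_mul, h i, ← mul_assoc, mul_assoc (G i j), Units.mul_inv, mul_one]

lemma sset_eq_of_assoc (G : Matrix (Fin k) (Fin n) R) (j j' : Fin n) (u : Rˣ)
    (h : ∀ i, G i j' = G i j * (u : R)) :
    {v : Fin k → R | ∃ t : R, v = fun i => G i j' * t} =
      {v : Fin k → R | ∃ t : R, v = fun i => G i j * t} := by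
  ext v
  simp only [Set.mem_setOf_eq]
  constructor
  · rintro ⟨t, rfl⟩
    exact ⟨(u : R) * t, funext fun i => by rw [h i, mul_assoc]⟩
  · rintro ⟨t, rfl⟩
    refine ⟨((u⁻¹ : Rˣ) : R) * t, funext fun i => ?_⟩
    rw [h i, mul_assoc, ← mul_assoc (u : R), Units.mul_inv, one_mul]

lemma assoc_of_sset (G : Matrix (Fin k) (Fin n) R) (j j' : Fin n)
    (hS : {v : Fin k → R | ∃ t : R, v = fun i => G i j' * t} =
      {v : Fin k → R | ∃ t : R, v = fun i => G i j * t}) :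
    ∃ u : Rˣ, ∀ i, G i j' = G i j * (u : R) := by
  have h1 : (fun i => G i j') ∈ {v : Fin k → R | ∃ t : R, v = fun i => G i j' * t} :=
    ⟨1, funext fun i => by rw [mul_one]⟩
  rw [hS] at h1
  obtain ⟨a, ha⟩ := h1
  have h2 : (fun i => G i j) ∈ {v : Fin k → R | ∃ t : R, v = fun i => G i j * t} :=
    ⟨1, funext fun i => by rw [mul_one]⟩
  rw [← hS] at h2
  obtain ⟨b, hb⟩ := h2
  exact assoc_of_same_cyclic (fun i => G i j) (fun i => G i j') a b
    (fun i => congrFun ha i) (fun i => congrFun hb i)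

lemma part1 (χ : AddChar R ℂ) (hχ : IsGenChar χ)
    (G : Matrix (Fin k) (Fin n) R)
    (Ω : Finset (Fin k → R))
    (hΩ : Ω = Finset.univ.filter
        (fun v : Fin k → R => ∃ j, ∃ u : Rˣ, v = fun i => G i j * (u : R)))
    (v₁ v₂ : ℝ)
    (hval : ∀ lam : AddChar (Fin k → R) ℂ,
      (∃ y : Fin n → R, lam (fun i => ∑ j, G i j * y j) ≠ 1) →
      (∑ g ∈ Ω, lam g) ∈ ({(v₁ : ℂ), (v₂ : ℂ)} : Set ℂ)) (x : Fin k → R) :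
    (∑ g ∈ Ω, whom χ (∑ i, x i * g i)) =
        (Ω.card : ℂ) - ∑ g ∈ Ω, χ (∑ i, x i * g i) ∧
      (∑ g ∈ Ω, whom χ (∑ i, x i * g i)) ∈
        ({0, (Ω.card : ℂ) - v₁, (Ω.card : ℂ) - v₂} : Set ℂ) := by
  classical
  haveI : Nonempty Rˣ := ⟨1⟩
  have hc : (Fintype.card Rˣ : ℂ) ≠ 0 := Nat.cast_ne_zero.2 Fintype.card_ne_zero
  -- closure of Ω under right multiplication by a unit
  have hstep : ∀ u : Rˣ, ∑ g ∈ Ω, χ ((∑ i, x i * g i) * (u : R)) =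
      ∑ g ∈ Ω, χ (∑ i, x i * g i) := by
    intro u
    refine Finset.sum_nbij' (fun g => fun i => g i * (u : R))
      (fun g => fun i => g i * ((u⁻¹ : Rˣ) : R)) ?_ ?_ ?_ ?_ ?_
    · intro g hg
      rw [hΩ, Finset.mem_filter] at hg ⊢
      obtain ⟨-, j, u₀, rfl⟩ := hg
      exact ⟨Finset.mem_univ _, j, u₀ * u, funext fun i => by
        simp [mul_assoc]⟩
    · intro g hg
      rw [hΩ, Finset.mem_filter] at hg ⊢
      obtain ⟨-, j, u₀, rfl⟩ := hg
      exact ⟨Finset.mem_univ _, j, u₀ * u⁻¹, funext fun i => by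
        simp [mul_assoc]⟩
    · intro g _
      funext i
      simp [mul_assoc]
    · intro g _
      funext i
      simp [mul_assoc]
    · intro g _
      rw [← sum_mul_assoc]
  have key : ∑ g ∈ Ω, ∑ u : Rˣ, χ ((u : R) * (∑ i, x i * g i)) =
      (Fintype.card Rˣ : ℂ) * ∑ g ∈ Ω, χ (∑ i, x i * g i) := by
    calc ∑ g ∈ Ω, ∑ u : Rˣ, χ ((u : R) * (∑ i, x i * g i))
        = ∑ g ∈ Ω, ∑ u : Rˣ, χ ((∑ i, x i * g i) * (u : R)) :=
          Finset.sum_congr rfl fun g _ => sym χ hχ _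
      _ = ∑ u : Rˣ, ∑ g ∈ Ω, χ ((∑ i, x i * g i) * (u : R)) := Finset.sum_comm
      _ = ∑ _u : Rˣ, ∑ g ∈ Ω, χ (∑ i, x i * g i) :=
          Finset.sum_congr rfl fun u _ => hstep u
      _ = (Fintype.card Rˣ : ℂ) * ∑ g ∈ Ω, χ (∑ i, x i * g i) := by
          rw [Finset.sum_const, Finset.card_univ, nsmul_eq_mul]
  have heq : (∑ g ∈ Ω, whom χ (∑ i, x i * g i)) =
      (Ω.card : ℂ) - ∑ g ∈ Ω, χ (∑ i, x i * g i) := by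
    simp only [whom]
    rw [Finset.sum_sub_distrib, Finset.sum_const, ← Finset.mul_sum, key, ← mul_assoc,
      inv_mul_cancel₀ hc, one_mul, nsmul_eq_mul, mul_one]
  refine ⟨heq, ?_⟩
  by_cases hcase : ∀ y : Fin n → R, χ (∑ i, x i * (∑ j, G i j * y j)) = 1
  · -- the character is trivial on the column space: the sum is |Ω|
    have hall : ∀ g ∈ Ω, χ (∑ i, x i * g i) = 1 := by
      intro g hg
      rw [hΩ, Finset.mem_filter] at hg
      obtain ⟨-, j, u, rfl⟩ := hg
      have hy := hcase (fun j' => if j' = j then (u : R) else 0)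
      have hrw : ∀ i, (∑ j', G i j' * (if j' = j then (u : R) else 0)) = G i j * (u : R) := by
        intro i
        rw [Finset.sum_eq_single j]
        · rw [if_pos rfl]
        · intro j' _ hj'
          rw [if_neg hj', mul_zero]
        · intro h
          exact absurd (Finset.mem_univ j) h
      have hsum2 : (∑ i, x i * (∑ j', G i j' * (if j' = j then (u : R) else 0))) =
          ∑ i, x i * (G i j * (u : R)) :=
        Finset.sum_congr rfl fun i _ => by rw [hrw i]
      rw [hsum2] at hy
      exact hy
    have hsum : ∑ g ∈ Ω, χ (∑ i, x i * g i) = (Ω.card : ℂ) := by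
      rw [Finset.sum_congr rfl hall, Finset.sum_const, nsmul_eq_mul, mul_one]
    rw [heq, hsum, sub_self]
    exact Set.mem_insert 0 _
  · push_neg at hcase
    obtain ⟨y, hy⟩ := hcase
    have hmem := hval (vecChar χ x) ⟨y, by rw [vecChar_apply]; exact hy⟩
    have hlam : ∑ g ∈ Ω, vecChar χ x g = ∑ g ∈ Ω, χ (∑ i, x i * g i) :=
      Finset.sum_congr rfl fun g _ => rfl
    rw [hlam] at hmem
    rw [heq]
    rcases hmem with h | h
    · rw [h]
      exact Set.mem_insert_of_mem _ (Set.mem_insert _ _)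
    · rw [Set.mem_singleton_iff] at h
      rw [h]
      exact Set.mem_insert_of_mem _ (Set.mem_insert_of_mem _ rfl)

end Main

section Part2
variable {R : Type} [Ring R] [Fintype R]

/-- Abstract double counting: if classes `Cl` have size `r` times the orbit size, the
plain sum over indices equals `r` times the sum over the union of the orbits. -/
lemma weighted_orbit_sum {ι γ : Type} [Fintype ι] [DecidableEq γ] [DecidableEq ι]
    (O : ι → Finset γ) (Cl : ι → Finset ι) (Ω : Finset γ) (F : γ → ℂ) (pt : ι → γ) (r : ℝ)
    (hObig : ∀ j, O j ⊆ Ω)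
    (hcover : ∀ g ∈ Ω, ∃ j, g ∈ O j)
    (hdisj : ∀ j j' g, g ∈ O j → g ∈ O j' → O j = O j')
    (hClO : ∀ j j', j' ∈ Cl j ↔ O j' = O j)
    (hmod : ∀ j, ((Cl j).card : ℝ) = r * ((O j).card : ℝ))
    (hpt : ∀ j, pt j ∈ O j)
    (hFconst : ∀ j, ∀ g ∈ O j, F g = F (pt j)) :
    ∑ j, F (pt j) = (r : ℂ) * ∑ g ∈ Ω, F g := by
  classical
  have hmodC : ∀ j, ((Cl j).card : ℂ) = (r : ℂ) * ((O j).card : ℂ) := by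
    intro j
    have := hmod j
    have h2 : (((Cl j).card : ℝ) : ℂ) = ((r * ((O j).card : ℝ) : ℝ) : ℂ) := by rw [this]
    push_cast at h2 ⊢
    exact h2
  have hOcard : ∀ j, ((O j).card : ℂ) ≠ 0 := fun j =>
    Nat.cast_ne_zero.2 (Finset.card_ne_zero_of_mem (hpt j))
  calc ∑ j, F (pt j)
      = ∑ j, ((O j).card : ℂ)⁻¹ * ∑ g ∈ O j, F g := by
        refine Finset.sum_congr rfl fun j _ => ?_
        rw [Finset.sum_congr rfl (fun g hg => hFconst j g hg), Finset.sum_const, nsmul_eq_mul,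
          ← mul_assoc, inv_mul_cancel₀ (hOcard j), one_mul]
    _ = ∑ j, ∑ g ∈ Ω, (if g ∈ O j then ((O j).card : ℂ)⁻¹ * F g else 0) := by
        refine Finset.sum_congr rfl fun j _ => ?_
        rw [Finset.sum_ite_mem, Finset.inter_eq_right.2 (hObig j), Finset.mul_sum]
    _ = ∑ g ∈ Ω, ∑ j, (if g ∈ O j then ((O j).card : ℂ)⁻¹ * F g else 0) := Finset.sum_comm
    _ = ∑ g ∈ Ω, (r : ℂ) * F g := by
        refine Finset.sum_congr rfl fun g hg => ?_
        obtain ⟨j₀, hj₀⟩ := hcover g hg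
        have hfil : Finset.univ.filter (fun j => g ∈ O j) = Cl j₀ := by
          ext j
          simp only [Finset.mem_filter, Finset.mem_univ, true_and]
          constructor
          · intro hgj
            exact (hClO j₀ j).2 (hdisj j j₀ g hgj hj₀)
          · intro hj
            rw [(hClO j₀ j).1 hj]
            exact hj₀
        rw [← Finset.sum_filter, hfil]
        have hOj : ∀ j ∈ Cl j₀, ((O j).card : ℂ)⁻¹ * F g = ((O j₀).card : ℂ)⁻¹ * F g := by
          intro j hj
          rw [(hClO j₀ j).1 hj]
        rw [Finset.sum_congr rfl hOj, Finset.sum_const, nsmul_eq_mul, hmodC j₀,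
          mul_assoc, ← mul_assoc ((O j₀).card : ℂ), mul_inv_cancel₀ (hOcard j₀), one_mul]
    _ = (r : ℂ) * ∑ g ∈ Ω, F g := by rw [Finset.mul_sum]

variable {k n : ℕ}

lemma part2 (χ : AddChar R ℂ) (hχ : IsGenChar χ)
    (G : Matrix (Fin k) (Fin n) R) (r : ℝ)
    (hmod : ∀ j, ((Finset.univ.filter (fun j' =>
          {v : Fin k → R | ∃ t : R, v = fun i => G i j' * t} =
          {v : Fin k → R | ∃ t : R, v = fun i => G i j * t})).card : ℝ) =
        r * ((Finset.image (fun u : Rˣ => fun i => G i j * (u : R))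
                (Finset.univ : Finset Rˣ)).card : ℝ))
    (Ω : Finset (Fin k → R))
    (hΩ : Ω = Finset.univ.filter
        (fun v : Fin k → R => ∃ j, ∃ u : Rˣ, v = fun i => G i j * (u : R)))
    (x : Fin k → R) :
    ∑ j, whom χ (∑ i, x i * G i j) =
      (r : ℂ) * ∑ g ∈ Ω, whom χ (∑ i, x i * g i) := by
  classical
  have hmem_orbit : ∀ (j : Fin n) (g : Fin k → R),
      g ∈ Finset.image (fun u : Rˣ => fun i => G i j * (u : R)) Finset.univ ↔
        ∃ u : Rˣ, g = fun i => G i j * (u : R) := by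
    intro j g
    simp only [Finset.mem_image, Finset.mem_univ, true_and]
    constructor
    · rintro ⟨u, rfl⟩; exact ⟨u, rfl⟩
    · rintro ⟨u, rfl⟩; exact ⟨u, rfl⟩
  apply weighted_orbit_sum
    (F := fun g => whom χ (∑ i, x i * g i))
    (pt := fun j => fun i => G i j)
    (Ω := Ω) (r := r)
    (O := fun j => Finset.image (fun u : Rˣ => fun i => G i j * (u : R)) Finset.univ)
    (Cl := fun j => Finset.univ.filter (fun j' =>
          {v : Fin k → R | ∃ t : R, v = fun i => G i j' * t} =
          {v : Fin k → R | ∃ t : R, v = fun i => G i j * t}))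
  · -- hObig
    intro j g hg
    rw [hΩ, Finset.mem_filter]
    obtain ⟨u, rfl⟩ := (hmem_orbit j g).1 hg
    exact ⟨Finset.mem_univ _, j, u, rfl⟩
  · -- hcover
    intro g hg
    rw [hΩ, Finset.mem_filter] at hg
    obtain ⟨-, j, u, rfl⟩ := hg
    exact ⟨j, (hmem_orbit j _).2 ⟨u, rfl⟩⟩
  · -- hdisj
    intro j j' g hgj hgj'
    obtain ⟨u₁, rfl⟩ := (hmem_orbit j _).1 hgj
    obtain ⟨u₂, hu₂⟩ := (hmem_orbit j' _).1 hgj'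
    have hcc : ∀ i, G i j = G i j' * ((u₂ * u₁⁻¹ : Rˣ) : R) := by
      intro i
      have h1 : G i j * (u₁ : R) = G i j' * (u₂ : R) := congrFun hu₂ i
      calc G i j = G i j * (u₁ : R) * ((u₁⁻¹ : Rˣ) : R) := by
            rw [mul_assoc, Units.mul_inv, mul_one]
        _ = G i j' * (u₂ : R) * ((u₁⁻¹ : Rˣ) : R) := by rw [h1]
        _ = G i j' * ((u₂ * u₁⁻¹ : Rˣ) : R) := by rw [Units.val_mul, mul_assoc]
    exact orbit_eq_of_assoc G j' j (u₂ * u₁⁻¹) hcc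
  · -- hClO
    intro j j'
    simp only [Finset.mem_filter, Finset.mem_univ, true_and]
    constructor
    · intro hS
      obtain ⟨u, hu⟩ := assoc_of_sset G j j' hS
      exact orbit_eq_of_assoc G j j' u hu
    · intro hOeq
      have hcolj' : (fun i => G i j') ∈
          Finset.image (fun u : Rˣ => fun i => G i j' * (u : R)) Finset.univ :=
        (hmem_orbit j' _).2 ⟨1, funext fun i => by simp⟩
      rw [hOeq] at hcolj'
      obtain ⟨u, hu⟩ := (hmem_orbit j _).1 hcolj'
      exact sset_eq_of_assoc G j j' u fun i => congrFun hu i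
  · -- hmod
    exact hmod
  · -- hpt
    intro j
    exact (hmem_orbit j _).2 ⟨1, funext fun i => by simp⟩
  · -- hFconst
    intro j g hg
    obtain ⟨u, rfl⟩ := (hmem_orbit j _).1 hg
    show whom χ (∑ i, x i * (G i j * (u : R))) = _
    rw [sum_mul_assoc, whom_unit_right χ hχ]

end Part2


/-- Character-sum criterion: let `Ω = g₁R^× ∪ … ∪ gₙR^×` be the union of the
unit orbits of the (nonzero) columns of `G`, contained in the column space
`D = {Gy}`, and suppose every character of `(D,+)` that is nontrivial on `D`
sums over `Ω` to `v₁` or `v₂`.  Then for every `x ∈ R^k` the sum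
`Σ_{g∈Ω} w_hom(x·g) = |Ω| − Σ_{g∈Ω} χ(x·g)` takes only the values
`0`, `|Ω|−v₁`, `|Ω|−v₂`; hence (when `C` is modular of index `r`) the left
code `C = {xG}` has at most two nonzero homogeneous weights. -/
theorem twoValued_charSum_gives_twoWeight {R : Type} [Ring R] [Fintype R]
    (χ : AddChar R ℂ) (hχ : IsGenChar χ)
    (k n : ℕ) (G : Matrix (Fin k) (Fin n) R)
    (hcolnz : ∀ j, (fun i => G i j) ≠ (0 : Fin k → R))
    (r : ℝ)
    (hmod : ∀ j, ((Finset.univ.filter (fun j' =>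
          {v : Fin k → R | ∃ t : R, v = fun i => G i j' * t} =
          {v : Fin k → R | ∃ t : R, v = fun i => G i j * t})).card : ℝ) =
        r * ((Finset.image (fun u : Rˣ => fun i => G i j * (u : R))
                (Finset.univ : Finset Rˣ)).card : ℝ))
    (Ω : Finset (Fin k → R))
    (hΩ : Ω = Finset.univ.filter
        (fun v : Fin k → R => ∃ j, ∃ u : Rˣ, v = fun i => G i j * (u : R)))
    (v₁ v₂ : ℝ)
    (hval : ∀ lam : AddChar (Fin k → R) ℂ,
      (∃ y : Fin n → R, lam (fun i => ∑ j, G i j * y j) ≠ 1) →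
      (∑ g ∈ Ω, lam g) ∈ ({(v₁ : ℂ), (v₂ : ℂ)} : Set ℂ)) :
    (∀ x : Fin k → R,
      (∑ g ∈ Ω, whom χ (∑ i, x i * g i)) =
        (Ω.card : ℂ) - ∑ g ∈ Ω, χ (∑ i, x i * g i) ∧
      (∑ g ∈ Ω, whom χ (∑ i, x i * g i)) ∈
        ({0, (Ω.card : ℂ) - v₁, (Ω.card : ℂ) - v₂} : Set ℂ)) ∧
    (∀ x : Fin k → R,
      whomV χ (fun j => ∑ i, x i * G i j) ∈
        ({0, (r : ℂ) * ((Ω.card : ℂ) - v₁),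
             (r : ℂ) * ((Ω.card : ℂ) - v₂)} : Set ℂ)) := by
  classical
  refine ⟨fun x => part1 χ hχ G Ω hΩ v₁ v₂ hval x, fun x => ?_⟩
  have h2 := part2 χ hχ G r hmod Ω hΩ x
  have h1 := (part1 χ hχ G Ω hΩ v₁ v₂ hval x).2
  have hgoal : whomV χ (fun j => ∑ i, x i * G i j) = ∑ j, whom χ (∑ i, x i * G i j) := rfl
  rw [hgoal, h2]
  simp only [Set.mem_insert_iff, Set.mem_singleton_iff] at h1 ⊢
  rcases h1 with h | h | h
  · rw [h, mul_zero]
    left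
    rfl
  · rw [h]
    right; left; rfl
  · rw [h]
    right; right; rfl
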